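/- For every τ > 0, r ≥ 1 and z ∈ ℝ, with y = τz/√(2(1+τ²)) and c = (1+τ²)^{−(r+1/2)}: ∫_0^∞ φ(z−λ) j⁺(λ|τ²,r) dλ = φ(z) · c · [ ₁F₁(r+1/2, 1/2; y²) + 2y · (Γ(r+1)/Γ(r+1/2)) · ₁F₁(r+1, 3/2; y²) ]. Equivalently, the one-sided z Bayes factor BF₁₀(z|τ²,r) equals c[₁F₁(r+1/2,1/2;y²) + 2y (Γ(r+1)/Γ(r+1/2)) ₁F₁(r+1,3/2;y²)]. -/

import Mathlib

open Real MeasureTheory Filter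

/-- Rising factorial (Pochhammer symbol) `(a)_k`. -/
noncomputable def risingFac (a : ℝ) (k : ℕ) : ℝ := (ascPochhammer ℝ k).eval a

/-- Confluent hypergeometric function `₁F₁(a, b; x)`. -/
noncomputable def oneF1 (a b x : ℝ) : ℝ :=
  ∑' k : ℕ, (risingFac a k / risingFac b k) * x ^ k / (Nat.factorial k : ℝ)

/-- Standard normal density. -/
noncomputable def stdNormalPdf (x : ℝ) : ℝ :=
  (Real.sqrt (2 * Real.pi))⁻¹ * Real.exp (-x ^ 2 / 2)

/-- Normal-moment density `j(λ | τ², r)` of order `r`. -/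
noncomputable def normalMomentPdf (τ r l : ℝ) : ℝ :=
  (l ^ 2) ^ r / ((2 * τ ^ 2) ^ (r + 1 / 2) * Real.Gamma (r + 1 / 2)) *
    Real.exp (-l ^ 2 / (2 * τ ^ 2))

/-- One-sided normal-moment density `j⁺(λ | τ², r) = 2 j(λ | τ², r)` on `(0, ∞)`. -/
noncomputable def normalMomentPdfPos (τ r l : ℝ) : ℝ := 2 * normalMomentPdf τ r l

lemma risingFac_zero (a : ℝ) : risingFac a 0 = 1 := by simp [risingFac]

lemma risingFac_succ (a : ℝ) (n : ℕ) :
    risingFac a (n + 1) = risingFac a n * (a + n) := by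
  simp [risingFac, ascPochhammer_succ_eval]

lemma risingFac_pos {a : ℝ} (ha : 0 < a) (n : ℕ) : 0 < risingFac a n := by
  induction n with
  | zero => simp [risingFac_zero]
  | succ n ih => rw [risingFac_succ]; positivity

lemma Gamma_add_nat {x : ℝ} (hx : 0 < x) (n : ℕ) :
    Real.Gamma (x + n) = Real.Gamma x * risingFac x n := by
  induction n with
  | zero => simp [risingFac_zero]
  | succ n ih =>
    have hxn : (0:ℝ) < x + n := by positivity
    have h : x + (n+1 : ℕ) = (x + n) + 1 := by push_cast; ring
    rw [h, Real.Gamma_add_one hxn.ne', ih, risingFac_succ]; ring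

lemma factorial_two_mul (m : ℕ) :
    ((2 * m).factorial : ℝ) = 4 ^ m * m.factorial * risingFac (1/2) m := by
  induction m with
  | zero => simp [risingFac_zero]
  | succ m ih =>
    have h : 2 * (m + 1) = (2 * m + 1) + 1 := by ring
    rw [h, Nat.factorial_succ (2*m+1), Nat.factorial_succ (2*m), Nat.factorial_succ m,
      risingFac_succ]
    push_cast [ih]
    ring

lemma factorial_two_mul_add_one (m : ℕ) :
    ((2 * m + 1).factorial : ℝ) = 4 ^ m * m.factorial * risingFac (3/2) m := by
  induction m with
  | zero => simp [risingFac_zero]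
  | succ m ih =>
    have h : 2 * (m + 1) + 1 = ((2 * m + 1) + 1) + 1 := by ring
    rw [h, Nat.factorial_succ (2*m+1+1), Nat.factorial_succ (2*m+1), Nat.factorial_succ m,
      risingFac_succ]
    push_cast [ih]
    ring

lemma summable_oneF1_terms (a b x : ℝ) (hb : 0 < b) :
    Summable (fun m : ℕ => risingFac a m / risingFac b m * x ^ m / (m.factorial : ℝ)) := by
  apply summable_of_ratio_norm_eventually_le (r := 1/2) (by norm_num)
  refine eventually_atTop.2 ⟨⌈|a|⌉₊ + ⌈4*(|x|+1)⌉₊, fun m hm => ?_⟩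
  have hma : |a| ≤ m := by
    calc |a| ≤ (⌈|a|⌉₊ : ℝ) := Nat.le_ceil _
      _ ≤ m := by exact_mod_cast le_trans (Nat.le_add_right _ _) hm
  have hmx : 4*(|x|+1) ≤ m := by
    calc 4*(|x|+1) ≤ (⌈4*(|x|+1)⌉₊ : ℝ) := Nat.le_ceil _
      _ ≤ m := by exact_mod_cast le_trans (Nat.le_add_left _ _) hm
  have hbm : 0 < risingFac b m := risingFac_pos hb m
  have hbm' : (0:ℝ) < b + m := by positivity
  have hstep : risingFac a (m+1) / risingFac b (m+1) * x^(m+1) / (((m+1).factorial : ℕ) : ℝ)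
      = (risingFac a m / risingFac b m * x^m / ((m.factorial : ℕ) : ℝ)) *
        ((a+m)*x/((b+m)*((m:ℝ)+1))) := by
    rw [risingFac_succ a, risingFac_succ b, pow_succ, Nat.factorial_succ]
    have hf : ((m.factorial : ℕ) : ℝ) ≠ 0 := by positivity
    push_cast
    field_simp
  rw [hstep, norm_mul, Real.norm_eq_abs, Real.norm_eq_abs, mul_comm (1/2 : ℝ)]
  apply mul_le_mul_of_nonneg_left _ (abs_nonneg _)
  rw [abs_div, abs_mul]
  have habs : |(b + m) * ((m:ℝ)+1)| = (b + m) * ((m:ℝ)+1) := abs_of_pos (by positivity)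
  rw [habs, div_le_iff₀ (by positivity)]
  have h1 : |a + (m:ℝ)| ≤ |a| + m := by
    calc |a + (m:ℝ)| ≤ |a| + |(m:ℝ)| := abs_add_le _ _
      _ = |a| + m := by rw [Nat.abs_cast]
  have h2 : |a + (m:ℝ)| * |x| ≤ (|a| + m) * |x| :=
    mul_le_mul_of_nonneg_right h1 (abs_nonneg x)
  have hx0 : (0:ℝ) ≤ |x| := abs_nonneg x
  nlinarith [hbm'.le, abs_nonneg (a + (m:ℝ))]




lemma poly_gauss_eqOn {a r : ℝ} (k : ℕ) :
    Set.EqOn (fun l : ℝ => (l^2)^r * Real.exp (-a * l^2) * l^k)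
      (fun l : ℝ => l ^ (2*r+(k:ℝ)) * Real.exp (-a * l^2)) (Set.Ioi 0) := by
  intro l hl
  have hl0 : (0:ℝ) < l := hl
  simp only
  have h1 : ((l^2 : ℝ))^r * l^k = l ^ (2*r+(k:ℝ)) := by
    rw [← Real.rpow_natCast l 2, ← Real.rpow_natCast l k, ← Real.rpow_mul hl0.le,
      ← Real.rpow_add hl0]
    norm_num
  rw [← h1]; ring

lemma integrableOn_poly_gauss {a r : ℝ} (ha : 0 < a) (hr : 1 ≤ r) (k : ℕ) :
    IntegrableOn (fun l : ℝ => (l^2)^r * Real.exp (-a * l^2) * l^k) (Set.Ioi 0) := by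
  have h := integrableOn_rpow_mul_exp_neg_mul_sq ha (s := 2*r+(k:ℝ)) (by have := (Nat.cast_nonneg k : (0:ℝ) ≤ k); linarith)
  exact h.congr_fun (fun l hl => ((poly_gauss_eqOn k) hl).symm) measurableSet_Ioi

lemma integral_poly_gauss {a r : ℝ} (ha : 0 < a) (hr : 1 ≤ r) (k : ℕ) :
    ∫ l in Set.Ioi (0:ℝ), (l^2)^r * Real.exp (-a * l^2) * l^k
      = a ^ (-(2*r+(k:ℝ)+1)/2) * (1/2) * Real.Gamma ((2*r+(k:ℝ)+1)/2) := by
  rw [setIntegral_congr_fun measurableSet_Ioi (poly_gauss_eqOn k)]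
  rw [← integral_rpow_mul_exp_neg_mul_rpow two_pos (by have := (Nat.cast_nonneg k : (0:ℝ) ≤ k); linarith : (-1:ℝ) < 2*r+(k:ℝ)) ha]
  refine setIntegral_congr_fun measurableSet_Ioi (fun x hx => ?_)
  norm_num [Real.rpow_two]

noncomputable def aa (τ : ℝ) : ℝ := (1 + τ^2) / (2 * τ^2)

lemma haa {τ : ℝ} (hτ : 0 < τ) : 0 < aa τ := by unfold aa; positivity

noncomputable def KK (τ r z : ℝ) : ℝ :=
  stdNormalPdf z * (2 / ((2 * τ^2) ^ (r + 1/2) * Real.Gamma (r + 1/2)))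

noncomputable def ff (τ r z : ℝ) (k : ℕ) (l : ℝ) : ℝ :=
  (KK τ r z * z^k / k.factorial) * (((l^2)^r * Real.exp (-(aa τ) * l^2)) * l^k)

noncomputable def II (τ r z : ℝ) (k : ℕ) : ℝ :=
  (KK τ r z * z^k / k.factorial) *
    ((aa τ) ^ (-(2*r+(k:ℝ)+1)/2) * (1/2) * Real.Gamma ((2*r+(k:ℝ)+1)/2))

lemma pointwise {τ r z : ℝ} (hτ : 0 < τ) (l : ℝ) :
    stdNormalPdf (z - l) * normalMomentPdfPos τ r l = ∑' k : ℕ, ff τ r z k l := by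
  have hτ0 : τ ≠ 0 := hτ.ne'
  have key : stdNormalPdf (z - l) * normalMomentPdfPos τ r l
      = (KK τ r z * ((l^2)^r * Real.exp (-(aa τ) * l^2))) * Real.exp (z*l) := by
    unfold normalMomentPdfPos normalMomentPdf KK aa stdNormalPdf
    have hexp : Real.exp (-(z-l)^2/2) * Real.exp (-l^2/(2*τ^2))
        = Real.exp (-z^2/2) * (Real.exp (-((1+τ^2)/(2*τ^2)) * l^2) * Real.exp (z*l)) := by
      rw [← Real.exp_add, ← Real.exp_add, ← Real.exp_add]
      congr 1
      field_simp
      ring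
    linear_combination ((Real.sqrt (2*Real.pi))⁻¹ * 2 * (l^2)^r /
      ((2*τ^2)^(r+1/2) * Real.Gamma (r+1/2))) * hexp
  rw [key]
  have hexp_sum : Real.exp (z*l) = ∑' k : ℕ, (z*l)^k / (k.factorial : ℝ) := by
    rw [Real.exp_eq_exp_ℝ, NormedSpace.exp_eq_tsum_div]
  rw [hexp_sum, ← tsum_mul_left]
  refine tsum_congr fun k => ?_
  unfold ff
  rw [mul_pow]
  ring

lemma meas_ff (τ r z : ℝ) (k : ℕ) : Measurable (ff τ r z k) := by
  unfold ff
  fun_prop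

lemma int_ff {τ r z : ℝ} (hτ : 0 < τ) (hr : 1 ≤ r) (k : ℕ) :
    IntegrableOn (ff τ r z k) (Set.Ioi 0) := by
  unfold ff
  exact (integrableOn_poly_gauss (haa hτ) hr k).const_mul _

lemma int_ff_val {τ r z : ℝ} (hτ : 0 < τ) (hr : 1 ≤ r) (k : ℕ) :
    ∫ l in Set.Ioi (0:ℝ), ff τ r z k l = II τ r z k := by
  unfold ff II
  rw [integral_const_mul, integral_poly_gauss (haa hτ) hr k]

lemma norm_int {τ r z : ℝ} (hτ : 0 < τ) (hr : 1 ≤ r) (k : ℕ) :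
    ∫ l in Set.Ioi (0:ℝ), ‖ff τ r z k l‖ = |II τ r z k| := by
  have ha := haa hτ
  have hk0 : (0:ℝ) ≤ (k:ℝ) := Nat.cast_nonneg k
  have hΓ : 0 < Real.Gamma ((2*r+(k:ℝ)+1)/2) := Real.Gamma_pos_of_pos (by linarith)
  have h1 : ∫ l in Set.Ioi (0:ℝ), ‖ff τ r z k l‖
      = ∫ l in Set.Ioi (0:ℝ),
          |KK τ r z * z^k / k.factorial| * (((l^2)^r * Real.exp (-(aa τ) * l^2)) * l^k) := by
    refine setIntegral_congr_fun measurableSet_Ioi (fun l hl => ?_)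
    have hl0 : (0:ℝ) < l := hl
    have hg : (0:ℝ) ≤ ((l^2)^r * Real.exp (-(aa τ) * l^2)) * l^k := by positivity
    rw [Real.norm_eq_abs]; unfold ff; rw [abs_mul, abs_of_nonneg hg]
  rw [h1, integral_const_mul, integral_poly_gauss ha hr k]
  unfold II
  rw [abs_mul]
  congr 1
  have hnn : 0 ≤ (aa τ) ^ (-(2*r+(k:ℝ)+1)/2) * (1/2) * Real.Gamma ((2*r+(k:ℝ)+1)/2) := by
    have := Real.rpow_nonneg ha.le (-(2*r+(k:ℝ)+1)/2)
    nlinarith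
  exact (abs_of_nonneg hnn).symm

lemma II_even {τ r z : ℝ} (hτ : 0 < τ) (hr : 1 ≤ r) {y : ℝ}
    (hy2 : 4 * aa τ * y^2 = z^2) (m : ℕ) :
    II τ r z (2*m) = (KK τ r z * (aa τ) ^ (-(r+1/2)) * (1/2) * Real.Gamma (r+1/2)) *
      (risingFac (r+1/2) m / risingFac (1/2) m * (y^2)^m / m.factorial) := by
  have ha := haa hτ
  unfold II
  have hgam : Real.Gamma ((2*r+((2*m:ℕ):ℝ)+1)/2) = Real.Gamma (r+1/2) * risingFac (r+1/2) m := by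
    have h : (2*r+((2*m:ℕ):ℝ)+1)/2 = (r+1/2) + (m:ℕ) := by push_cast; ring
    rw [h, Gamma_add_nat (by linarith)]
  have hrp : (aa τ) ^ (-(2*r+((2*m:ℕ):ℝ)+1)/2) = (aa τ) ^ (-(r+1/2)) * ((aa τ) ^ m)⁻¹ := by
    have h : -(2*r+((2*m:ℕ):ℝ)+1)/2 = (-(r+1/2)) + (-((m:ℕ):ℝ)) := by push_cast; ring
    rw [h, Real.rpow_add ha, Real.rpow_neg ha.le ((m:ℕ):ℝ), Real.rpow_natCast]
  rw [hgam, hrp, factorial_two_mul m]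
  have hz : z^(2*m) = 4^m * (aa τ)^m * (y^2)^m := by
    rw [pow_mul, ← hy2, mul_pow, mul_pow]
  rw [hz]
  have h1 : risingFac (1/2) m ≠ 0 := (risingFac_pos (by norm_num) m).ne'
  have h2 : ((m.factorial : ℕ):ℝ) ≠ 0 := by positivity
  have h3 : (aa τ)^m ≠ 0 := (pow_pos ha m).ne'
  field_simp

lemma II_odd {τ r z : ℝ} (hτ : 0 < τ) (hr : 1 ≤ r) {y : ℝ}
    (hy2 : 4 * aa τ * y^2 = z^2) (m : ℕ) :
    II τ r z (2*m+1) = (KK τ r z * z * (aa τ) ^ (-(r+1)) * (1/2) * Real.Gamma (r+1)) *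
      (risingFac (r+1) m / risingFac (3/2) m * (y^2)^m / m.factorial) := by
  have ha := haa hτ
  unfold II
  have hgam : Real.Gamma ((2*r+((2*m+1:ℕ):ℝ)+1)/2) = Real.Gamma (r+1) * risingFac (r+1) m := by
    have h : (2*r+((2*m+1:ℕ):ℝ)+1)/2 = (r+1) + (m:ℕ) := by push_cast; ring
    rw [h, Gamma_add_nat (by linarith)]
  have hrp : (aa τ) ^ (-(2*r+((2*m+1:ℕ):ℝ)+1)/2) = (aa τ) ^ (-(r+1)) * ((aa τ) ^ m)⁻¹ := by
    have h : -(2*r+((2*m+1:ℕ):ℝ)+1)/2 = (-(r+1)) + (-((m:ℕ):ℝ)) := by push_cast; ring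
    rw [h, Real.rpow_add ha, Real.rpow_neg ha.le ((m:ℕ):ℝ), Real.rpow_natCast]
  rw [hgam, hrp, factorial_two_mul_add_one m]
  have hz : z^(2*m+1) = z * (4^m * (aa τ)^m * (y^2)^m) := by
    rw [pow_succ, pow_mul, ← hy2, mul_pow, mul_pow]; ring
  rw [hz]
  have h1 : risingFac (3/2) m ≠ 0 := (risingFac_pos (by norm_num) m).ne'
  have h2 : ((m.factorial : ℕ):ℝ) ≠ 0 := by positivity
  have h3 : (aa τ)^m ≠ 0 := (pow_pos ha m).ne'
  field_simp

/-- Theorem 2.2: one-sided `z` Bayes factor. -/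
theorem one_sided_z_bayes_factor (τ r z y c : ℝ) (hτ : 0 < τ) (hr : 1 ≤ r)
    (hy : y = τ * z / Real.sqrt (2 * (1 + τ ^ 2)))
    (hc : c = (1 + τ ^ 2) ^ (-(r + 1 / 2))) :
    ∫ l in Set.Ioi (0 : ℝ), stdNormalPdf (z - l) * normalMomentPdfPos τ r l
      = stdNormalPdf z * c *
          (oneF1 (r + 1 / 2) (1 / 2) (y ^ 2)
            + 2 * y * (Real.Gamma (r + 1) / Real.Gamma (r + 1 / 2)) *
                oneF1 (r + 1) (3 / 2) (y ^ 2)) := by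
  have hτ0 : τ ≠ 0 := hτ.ne'
  have ha := haa hτ
  have hΓh : 0 < Real.Gamma (r + 1/2) := Real.Gamma_pos_of_pos (by linarith)
  have hΓ1 : 0 < Real.Gamma (r + 1) := Real.Gamma_pos_of_pos (by linarith)
  have hy2 : 4 * aa τ * y^2 = z^2 := by
    have hs : Real.sqrt (2*(1+τ^2)) ^ 2 = 2*(1+τ^2) := Real.sq_sqrt (by positivity)
    rw [hy]
    unfold aa
    rw [div_pow, hs]
    field_simp
    ring
  set Ce := KK τ r z * (aa τ) ^ (-(r+1/2)) * (1/2) * Real.Gamma (r+1/2) with hCe_def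
  set Co := KK τ r z * z * (aa τ) ^ (-(r+1)) * (1/2) * Real.Gamma (r+1) with hCo_def
  have hs1 : Summable (fun m : ℕ =>
      risingFac (r+1/2) m / risingFac (1/2) m * (y^2)^m / (m.factorial : ℝ)) :=
    summable_oneF1_terms _ _ _ (by norm_num)
  have hs2 : Summable (fun m : ℕ =>
      risingFac (r+1) m / risingFac (3/2) m * (y^2)^m / (m.factorial : ℝ)) :=
    summable_oneF1_terms _ _ _ (by norm_num)
  have hEe : (fun m : ℕ => II τ r z (2*m)) = fun m : ℕ =>
      Ce * (risingFac (r+1/2) m / risingFac (1/2) m * (y^2)^m / (m.factorial : ℝ)) :=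
    funext (II_even hτ hr hy2)
  have hEo : (fun m : ℕ => II τ r z (2*m+1)) = fun m : ℕ =>
      Co * (risingFac (r+1) m / risingFac (3/2) m * (y^2)^m / (m.factorial : ℝ)) :=
    funext (II_odd hτ hr hy2)
  have hIe : Summable (fun m : ℕ => II τ r z (2*m)) := by rw [hEe]; exact hs1.mul_left _
  have hIo : Summable (fun m : ℕ => II τ r z (2*m+1)) := by rw [hEo]; exact hs2.mul_left _
  have ht1nn : ∀ m : ℕ, 0 ≤ risingFac (r+1/2) m / risingFac (1/2) m * (y^2)^m / (m.factorial : ℝ) := by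
    intro m
    have := (risingFac_pos (show (0:ℝ) < r+1/2 by linarith) m).le
    have := (risingFac_pos (show (0:ℝ) < 1/2 by norm_num) m).le
    positivity
  have ht2nn : ∀ m : ℕ, 0 ≤ risingFac (r+1) m / risingFac (3/2) m * (y^2)^m / (m.factorial : ℝ) := by
    intro m
    have := (risingFac_pos (show (0:ℝ) < r+1 by linarith) m).le
    have := (risingFac_pos (show (0:ℝ) < 3/2 by norm_num) m).le
    positivity
  have habs : Summable (fun k : ℕ => |II τ r z k|) := by
    apply Summable.even_add_odd
    · have h : (fun m : ℕ => |II τ r z (2*m)|) = fun m : ℕ =>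
          |Ce| * (risingFac (r+1/2) m / risingFac (1/2) m * (y^2)^m / (m.factorial : ℝ)) := by
        funext m
        rw [congrFun hEe m, abs_mul, abs_of_nonneg (ht1nn m)]
      rw [h]; exact hs1.mul_left _
    · have h : (fun m : ℕ => |II τ r z (2*m+1)|) = fun m : ℕ =>
          |Co| * (risingFac (r+1) m / risingFac (3/2) m * (y^2)^m / (m.factorial : ℝ)) := by
        funext m
        rw [congrFun hEo m, abs_mul, abs_of_nonneg (ht2nn m)]
      rw [h]; exact hs2.mul_left _
  have hmeas : ∀ k : ℕ, AEStronglyMeasurable (ff τ r z k)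
      (volume.restrict (Set.Ioi (0:ℝ))) := fun k => (meas_ff τ r z k).aestronglyMeasurable
  have hnorm : ∀ k : ℕ, ∫⁻ l in Set.Ioi (0:ℝ), ‖ff τ r z k l‖₊
      = ENNReal.ofReal |II τ r z k| := by
    intro k
    simp_rw [← enorm_eq_nnnorm]
    rw [← ofReal_integral_norm_eq_lintegral_enorm (int_ff hτ hr k), norm_int hτ hr k]
  have hf' : ∑' k : ℕ, ∫⁻ l in Set.Ioi (0:ℝ), ‖ff τ r z k l‖₊ ≠ ⊤ := by
    rw [tsum_congr hnorm, ← ENNReal.ofReal_tsum_of_nonneg (fun k => abs_nonneg _) habs]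
    exact ENNReal.ofReal_ne_top
  have hCe : Ce = stdNormalPdf z * c := by
    have hmulA : aa τ * (2*τ^2) = 1 + τ^2 := by unfold aa; field_simp
    have hcomb : (aa τ) ^ (-(r+1/2)) * (2*τ^2) ^ (-(r+1/2)) = (1+τ^2) ^ (-(r+1/2)) := by
      rw [← Real.mul_rpow ha.le (by positivity), hmulA]
    have hp2 : (0:ℝ) < (2*τ^2) ^ (r+1/2) := Real.rpow_pos_of_pos (by positivity) _
    rw [hCe_def, hc, ← hcomb, Real.rpow_neg (by positivity : (0:ℝ) ≤ 2*τ^2)]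
    unfold KK
    field_simp
  have hsplit : (aa τ) ^ (-(r+1)) = (aa τ) ^ (-(r+1/2)) * (aa τ) ^ ((-(1/2)):ℝ) := by
    have h : (-(r+1)) = (-(r+1/2)) + ((-(1/2)):ℝ) := by ring
    rw [h, Real.rpow_add ha]
  have hza : z * (aa τ) ^ ((-(1/2)):ℝ) = 2*y := by
    have hs2' : (0:ℝ) < Real.sqrt 2 := Real.sqrt_pos.mpr (by norm_num)
    have hs1' : (0:ℝ) < Real.sqrt (1+τ^2) := Real.sqrt_pos.mpr (by positivity)
    have hsaa' : (0:ℝ) < Real.sqrt (aa τ) := Real.sqrt_pos.mpr ha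
    have h2τ : Real.sqrt (2*τ^2) = Real.sqrt 2 * τ := by
      rw [Real.sqrt_mul (by norm_num) (τ^2), Real.sqrt_sq hτ.le]
    have hsa : Real.sqrt (aa τ) * Real.sqrt (2*τ^2) = Real.sqrt (1+τ^2) := by
      rw [← Real.sqrt_mul ha.le]
      congr 1
      unfold aa
      field_simp
    rw [h2τ] at hsa
    have hs2sq : Real.sqrt 2 * Real.sqrt 2 = 2 := Real.mul_self_sqrt (by norm_num)
    have hrw : (aa τ) ^ ((-(1/2)):ℝ) = (Real.sqrt (aa τ))⁻¹ := by
      rw [Real.rpow_neg ha.le, ← Real.sqrt_eq_rpow]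
    rw [hrw, hy, Real.sqrt_mul (by norm_num) (1+τ^2)]
    field_simp
    linear_combination (-(z*Real.sqrt 2)) * hsa + (z*τ*Real.sqrt (aa τ)) * hs2sq
  have hCo : Co = stdNormalPdf z * c * (2*y*(Real.Gamma (r+1)/Real.Gamma (r+1/2))) := by
    have h : Co = Ce * (z*(aa τ)^((-(1/2)):ℝ)) * (Real.Gamma (r+1)/Real.Gamma (r+1/2)) := by
      rw [hCe_def, hCo_def, hsplit]
      field_simp
    rw [h, hCe, hza]
    ring
  calc ∫ l in Set.Ioi (0:ℝ), stdNormalPdf (z - l) * normalMomentPdfPos τ r l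
      = ∫ l in Set.Ioi (0:ℝ), ∑' k : ℕ, ff τ r z k l :=
        setIntegral_congr_fun measurableSet_Ioi (fun l _ => pointwise hτ l)
    _ = ∑' k : ℕ, ∫ l in Set.Ioi (0:ℝ), ff τ r z k l := integral_tsum hmeas hf'
    _ = ∑' k : ℕ, II τ r z k := tsum_congr (int_ff_val hτ hr)
    _ = (∑' m : ℕ, II τ r z (2*m)) + ∑' m : ℕ, II τ r z (2*m+1) :=
        (tsum_even_add_odd hIe hIo).symm
    _ = Ce * oneF1 (r+1/2) (1/2) (y^2) + Co * oneF1 (r+1) (3/2) (y^2) := by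
        rw [hEe, hEo, tsum_mul_left, tsum_mul_left]
        rfl
    _ = stdNormalPdf z * c *
          (oneF1 (r + 1/2) (1/2) (y^2)
            + 2 * y * (Real.Gamma (r+1) / Real.Gamma (r+1/2)) * oneF1 (r+1) (3/2) (y^2)) := by
        rw [hCe, hCo]
        ring
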